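/- Let d ∈ ℕ, 0 < p, q ≤ ∞, r ∈ ℝ, and let p′, q′, r′ be the conjugate parameters. Then for all sequences λ = (λ_{j̄,k̄}) and μ = (μ_{j̄,k̄}) indexed by Γ^d = ℕ_{-1}^d × ℤ^d one has the Hölder-type inequality Σ_{(j̄,k̄) ∈ Γ^d} |λ_{j̄,k̄} μ_{j̄,k̄}| ≤ ‖λ‖_{s^r_{p,q}b(Γ^d)} · ‖μ‖_{s^{r′+1}_{p′,q′}b(Γ^d)}. -/

import Mathlib

open MeasureTheory
open scoped ENNReal NNReal

/-- The `ℓ_q`-norm of an `ℝ≥0∞`-valued sequence, with the usual supremum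
modification for `q = ∞`. -/
noncomputable def lqNormE {ι : Type*} (q : ℝ≥0∞) (a : ι → ℝ≥0∞) : ℝ≥0∞ :=
  if q = ∞ then ⨆ i, a i else (∑' i, a i ^ q.toReal) ^ (1 / q.toReal)

/-- `|j̄|₁` for `j̄ ∈ ℕ_{-1}^d`, where the level `j̄ᵢ ∈ ℕ_{-1} = {-1,0,1,…}` is encoded
by a natural number `jᵢ` via `j̄ᵢ = jᵢ - 1`. -/
noncomputable def lvlSum (d : ℕ) (j : Fin d → ℕ) : ℝ :=
  ∑ i, (((j i : ℤ) - 1).natAbs : ℝ)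

/-- The sequence space (quasi-)norm `‖·‖_{s^r_{p,q}b(Γ^d)}` on sequences indexed by
`Γ^d = ℕ_{-1}^d × ℤ^d` (levels in `ℕ_{-1}` encoded by naturals, shifted by one). -/
noncomputable def besovSeqNorm (d : ℕ) (p q : ℝ≥0∞) (r : ℝ)
    (lam : (Fin d → ℕ) × (Fin d → ℤ) → ℂ) : ℝ≥0∞ :=
  lqNormE q (fun j : Fin d → ℕ =>
    (2 : ℝ≥0∞) ^ (lvlSum d j * (r - p.toReal⁻¹)) *
      lqNormE p (fun k : Fin d → ℤ => (‖lam (j, k)‖₊ : ℝ≥0∞)))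

/-- Conjugate exponent: `p′ = p/(p-1)` for `1 < p ≤ ∞` and `p′ = ∞` for `0 < p ≤ 1`. -/
noncomputable def conjExp (p : ℝ≥0∞) : ℝ≥0∞ :=
  if p ≤ 1 then ∞ else (1 - p⁻¹)⁻¹

/-- `σ_p = max(0, 1/p - 1)`. -/
noncomputable def sigmaP (p : ℝ≥0∞) : ℝ :=
  max 0 (p.toReal⁻¹ - 1)

/-- `(∑ a)^t ≤ ∑ a^t` for `0 < t ≤ 1`, finite sums. -/
lemma finsum_rpow_le {ι : Type*} (s : Finset ι) (a : ι → ℝ≥0∞) {t : ℝ}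
    (ht0 : 0 < t) (ht1 : t ≤ 1) :
    (∑ i ∈ s, a i) ^ t ≤ ∑ i ∈ s, a i ^ t := by
  classical
  induction s using Finset.induction with
  | empty => simp [ENNReal.zero_rpow_of_pos ht0]
  | insert _ _ h ih =>
    rw [Finset.sum_insert h, Finset.sum_insert h]
    exact (ENNReal.rpow_add_le_add_rpow _ _ ht0.le ht1).trans (by gcongr)

/-- `∑ a ≤ (∑ a^t)^{1/t}` for `0 < t ≤ 1`. -/
lemma tsum_le_rpow_tsum_rpow {ι : Type*} (a : ι → ℝ≥0∞) {t : ℝ}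
    (ht0 : 0 < t) (ht1 : t ≤ 1) :
    ∑' i, a i ≤ (∑' i, a i ^ t) ^ (1 / t) := by
  rw [ENNReal.tsum_eq_iSup_sum]
  refine iSup_le fun s => ?_
  have h1 : (∑ i ∈ s, a i) ^ t ≤ ∑' i, a i ^ t :=
    (finsum_rpow_le s a ht0 ht1).trans (ENNReal.sum_le_tsum s)
  calc (∑ i ∈ s, a i) = ((∑ i ∈ s, a i) ^ t) ^ (1 / t) := by
        rw [← ENNReal.rpow_mul, mul_one_div_cancel ht0.ne', ENNReal.rpow_one]
    _ ≤ _ := ENNReal.rpow_le_rpow h1 (by positivity)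

/-- Hölder for `tsum` with real conjugate exponents. -/
lemma tsum_inner_le {ι : Type*} (a b : ι → ℝ≥0∞) {pr qr : ℝ}
    (hpq : pr.HolderConjugate qr) :
    ∑' i, a i * b i ≤ (∑' i, a i ^ pr) ^ (1 / pr) * (∑' i, b i ^ qr) ^ (1 / qr) := by
  rw [ENNReal.tsum_eq_iSup_sum]
  refine iSup_le fun s => (ENNReal.inner_le_Lp_mul_Lq s a b hpq).trans ?_
  have hp0 := hpq.pos
  have hq0 := hpq.symm.pos
  have h1 : (0:ℝ) ≤ 1 / pr := by positivity
  have h2 : (0:ℝ) ≤ 1 / qr := by positivity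
  gcongr <;> exact ENNReal.sum_le_tsum s

lemma conjExp_facts {p : ℝ≥0∞} (hp1 : 1 < p) (hptop : p ≠ ∞) :
    conjExp p ≠ ∞ ∧ (conjExp p).toReal = (1 - p.toReal⁻¹)⁻¹ ∧ 1 < p.toReal := by
  have hpt : 1 < p.toReal := by
    rw [← ENNReal.toReal_one]
    exact (ENNReal.toReal_lt_toReal ENNReal.one_ne_top hptop).2 hp1
  have hinv1 : p⁻¹ < 1 := ENNReal.inv_lt_one.2 hp1
  have hne : (1 : ℝ≥0∞) - p⁻¹ ≠ 0 := (tsub_pos_of_lt hinv1).ne'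
  have hc : conjExp p = (1 - p⁻¹)⁻¹ := if_neg (not_le.2 hp1)
  refine ⟨?_, ?_, hpt⟩
  · rw [hc]; exact ENNReal.inv_ne_top.2 hne
  · rw [hc, ENNReal.toReal_inv,
      ENNReal.toReal_sub_of_le (ENNReal.inv_le_one.2 hp1.le) ENNReal.one_ne_top,
      ENNReal.toReal_inv, ENNReal.toReal_one]

/-- Hölder inequality for the `lqNormE` norms. -/
lemma lqNormE_holder {ι : Type*} (p : ℝ≥0∞) (hp : 0 < p) (a b : ι → ℝ≥0∞) :
    ∑' i, a i * b i ≤ lqNormE p a * lqNormE (conjExp p) b := by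
  rcases eq_or_ne p ∞ with rfl | hptop
  · have h1 : conjExp ∞ = 1 := by simp [conjExp]
    rw [h1, lqNormE, lqNormE, if_pos rfl, if_neg ENNReal.one_ne_top]
    simp only [ENNReal.toReal_one, ENNReal.rpow_one, one_div, inv_one]
    calc ∑' i, a i * b i ≤ ∑' i, (⨆ j, a j) * b i :=
          ENNReal.tsum_le_tsum fun i => mul_le_mul_left (le_iSup a i) _
      _ = (⨆ j, a j) * ∑' i, b i := ENNReal.tsum_mul_left
  · rcases le_or_gt p 1 with hp1 | hp1
    · have ht0 : 0 < p.toReal := ENNReal.toReal_pos hp.ne' hptop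
      have ht1 : p.toReal ≤ 1 := by
        rw [← ENNReal.toReal_one]
        exact ENNReal.toReal_mono ENNReal.one_ne_top hp1
      have hc : conjExp p = ∞ := if_pos hp1
      rw [hc, lqNormE, lqNormE, if_pos rfl, if_neg hptop]
      calc ∑' i, a i * b i ≤ ∑' i, a i * ⨆ j, b j :=
            ENNReal.tsum_le_tsum fun i => mul_le_mul_right (le_iSup b i) _
        _ = (∑' i, a i) * ⨆ j, b j := ENNReal.tsum_mul_right
        _ ≤ _ := mul_le_mul_left (tsum_le_rpow_tsum_rpow a ht0 ht1) _
    · obtain ⟨hqtop, hqt, hpt⟩ := conjExp_facts hp1 hptop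
      have hpt0 : (0:ℝ) < p.toReal - 1 := by linarith
      have hconj : p.toReal.HolderConjugate (conjExp p).toReal := by
        rw [Real.holderConjugate_iff]
        constructor
        · exact hpt
        · rw [hqt, inv_inv]
          have : p.toReal ≠ 0 := by positivity
          field_simp
          ring
      rw [lqNormE, lqNormE, if_neg hptop, if_neg hqtop]
      exact tsum_inner_le a b hconj

lemma exp_cancel (p : ℝ≥0∞) (hp : 0 < p) (r : ℝ) :
    (r - p.toReal⁻¹) + ((((-r + sigmaP p) + 1)) - (conjExp p).toReal⁻¹) = 0 := by
  rcases eq_or_ne p ∞ with rfl | hptop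
  · have h1 : conjExp ∞ = 1 := by simp [conjExp]
    simp [h1, sigmaP]
  · rcases le_or_gt p 1 with hp1 | hp1
    · have ht0 : 0 < p.toReal := ENNReal.toReal_pos hp.ne' hptop
      have ht1 : p.toReal ≤ 1 := by
        rw [← ENNReal.toReal_one]
        exact ENNReal.toReal_mono ENNReal.one_ne_top hp1
      have hs : sigmaP p = p.toReal⁻¹ - 1 := by
        rw [sigmaP, max_eq_right]
        have : (1:ℝ) ≤ p.toReal⁻¹ := (one_le_inv₀ ht0).2 ht1
        linarith
      have hc : conjExp p = ∞ := if_pos hp1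
      rw [hs, hc]
      simp
      ring
    · obtain ⟨hqtop, hqt, hpt⟩ := conjExp_facts hp1 hptop
      have hs : sigmaP p = 0 := by
        rw [sigmaP, max_eq_left]
        have : p.toReal⁻¹ < 1 := by
          rw [inv_lt_one_iff₀]; right; exact hpt
        linarith
      have h1 : (1:ℝ) - p.toReal⁻¹ ≠ 0 := by
        have : p.toReal⁻¹ < 1 := by rw [inv_lt_one_iff₀]; right; exact hpt
        linarith
      rw [hs, hqt, inv_inv]
      ring

/-- Hölder-type inequality for the Besov sequence spaces:
`Σ |λ_{j̄,k̄} μ_{j̄,k̄}| ≤ ‖λ‖_{s^r_{p,q}b} ‖μ‖_{s^{r′+1}_{p′,q′}b}` with `r′ = -r + σ_p`. -/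
theorem statement8 (d : ℕ) (p q : ℝ≥0∞) (hp : 0 < p) (hq : 0 < q) (r : ℝ)
    (lam mu : (Fin d → ℕ) × (Fin d → ℤ) → ℂ) :
    ∑' jk : (Fin d → ℕ) × (Fin d → ℤ), (‖lam jk * mu jk‖₊ : ℝ≥0∞) ≤
      besovSeqNorm d p q r lam *
        besovSeqNorm d (conjExp p) (conjExp q) ((-r + sigmaP p) + 1) mu := by
  set r' : ℝ := (-r + sigmaP p) + 1 with hr'
  have hcancel : (r - p.toReal⁻¹) + (r' - (conjExp p).toReal⁻¹) = 0 := exp_cancel p hp r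
  rw [ENNReal.tsum_prod']
  calc ∑' j : Fin d → ℕ, ∑' k : Fin d → ℤ, (‖lam (j,k) * mu (j,k)‖₊ : ℝ≥0∞)
      ≤ ∑' j : Fin d → ℕ,
          ((2:ℝ≥0∞) ^ (lvlSum d j * (r - p.toReal⁻¹)) *
              lqNormE p (fun k : Fin d → ℤ => (‖lam (j,k)‖₊ : ℝ≥0∞))) *
          ((2:ℝ≥0∞) ^ (lvlSum d j * (r' - (conjExp p).toReal⁻¹)) *
              lqNormE (conjExp p) (fun k : Fin d → ℤ => (‖mu (j,k)‖₊ : ℝ≥0∞))) := by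
        refine ENNReal.tsum_le_tsum fun j => ?_
        have h2 : (2:ℝ≥0∞) ^ (lvlSum d j * (r - p.toReal⁻¹)) *
            (2:ℝ≥0∞) ^ (lvlSum d j * (r' - (conjExp p).toReal⁻¹)) = 1 := by
          rw [← ENNReal.rpow_add _ _ two_ne_zero ENNReal.ofNat_ne_top, ← mul_add,
            hcancel, mul_zero, ENNReal.rpow_zero]
        calc ∑' k : Fin d → ℤ, (‖lam (j,k) * mu (j,k)‖₊ : ℝ≥0∞)
            = ∑' k : Fin d → ℤ, (‖lam (j,k)‖₊ : ℝ≥0∞) * (‖mu (j,k)‖₊ : ℝ≥0∞) := by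
              simp [nnnorm_mul, ENNReal.coe_mul]
          _ ≤ lqNormE p (fun k : Fin d → ℤ => (‖lam (j,k)‖₊ : ℝ≥0∞)) *
                lqNormE (conjExp p) (fun k : Fin d → ℤ => (‖mu (j,k)‖₊ : ℝ≥0∞)) :=
              lqNormE_holder p hp _ _
          _ = _ := by rw [mul_mul_mul_comm, h2, one_mul]
    _ ≤ _ := lqNormE_holder q hq _ _
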